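/- Let μ be a probability measure on ℝ with μ((0,∞)) = 1, let g(x) = ∫ (ε/2)·exp(−ε·|x|) dμ(ε), let M(t) = ∫ exp(t·ε) dμ(ε), and let γ > 0. Then ∫_{−γ}^{γ} g(x) dx = 1 − M(−γ). (The usefulness of the Randomized DP Laplace mechanism, i.e., the probability that the noise has absolute value at most γ, equals 1 − M_{1/b}(−γ).) -/

import Mathlib

open MeasureTheory Real

open intervalIntegral in
lemma exp_mul_interval (c a b : ℝ) (hc : c ≠ 0) :
    ∫ x in a..b, Real.exp (c * x) = c⁻¹ * (Real.exp (c * b) - Real.exp (c * a)) := by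
  have h := integral_comp_mul_left (a := a) (b := b) (fun x => Real.exp x) hc
  rw [h, integral_exp, smul_eq_mul]

lemma laplace_inner (ε γ : ℝ) (hε : 0 < ε) (hγ : 0 < γ) :
    ∫ x in Set.Icc (-γ) γ, ε / 2 * Real.exp (-(ε * |x|)) = 1 - Real.exp (-γ * ε) := by
  have hab : (-γ : ℝ) ≤ γ := by linarith
  have hcont : Continuous fun x : ℝ => ε / 2 * Real.exp (-(ε * |x|)) := by
    continuity
  rw [MeasureTheory.integral_Icc_eq_integral_Ioc,
    ← intervalIntegral.integral_of_le hab]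
  have h1 : IntervalIntegrable (fun x : ℝ => ε / 2 * Real.exp (-(ε * |x|))) volume (-γ) 0 :=
    hcont.intervalIntegrable _ _
  have h2 : IntervalIntegrable (fun x : ℝ => ε / 2 * Real.exp (-(ε * |x|))) volume 0 γ :=
    hcont.intervalIntegrable _ _
  rw [← intervalIntegral.integral_add_adjacent_intervals h1 h2]
  have e1 : ∫ x in (-γ:ℝ)..0, ε / 2 * Real.exp (-(ε * |x|))
      = ∫ x in (-γ:ℝ)..0, ε / 2 * Real.exp (ε * x) := by
    apply intervalIntegral.integral_congr
    intro x hx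
    rw [Set.uIcc_of_le (by linarith)] at hx
    have hx0 : x ≤ 0 := hx.2
    simp only [abs_of_nonpos hx0, mul_neg, neg_neg]
  have e2 : ∫ x in (0:ℝ)..γ, ε / 2 * Real.exp (-(ε * |x|))
      = ∫ x in (0:ℝ)..γ, ε / 2 * Real.exp (-ε * x) := by
    apply intervalIntegral.integral_congr
    intro x hx
    rw [Set.uIcc_of_le (by linarith)] at hx
    have hx0 : 0 ≤ x := hx.1
    simp only [abs_of_nonneg hx0, neg_mul]
  have hεne : ε ≠ 0 := ne_of_gt hε
  have hεne' : -ε ≠ 0 := by simpa using hεne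
  rw [e1, e2, intervalIntegral.integral_const_mul, intervalIntegral.integral_const_mul,
    exp_mul_interval ε (-γ) 0 hεne, exp_mul_interval (-ε) 0 γ hεne']
  rw [show ε * -γ = -γ * ε by ring, show -ε * γ = -γ * ε by ring]
  simp only [mul_zero, neg_mul, neg_zero, Real.exp_zero]
  field_simp
  ring

/-- The usefulness of the Randomized DP Laplace mechanism (the probability that the added
noise has absolute value at most `γ`) equals `1 − M_{1/b}(−γ)`, where `M` is the moment
generating function of the distribution `μ` of the reciprocal scale `1/b`. -/
theorem mixture_laplace_usefulness
    (μ : Measure ℝ) [IsProbabilityMeasure μ] (hμ : μ (Set.Ioi 0) = 1)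
    (g : ℝ → ℝ)
    (hg : ∀ x : ℝ, g x = ∫ ε, (ε / 2) * Real.exp (-(ε * |x|)) ∂μ)
    (M : ℝ → ℝ)
    (hM : ∀ t : ℝ, M t = ∫ ε, Real.exp (t * ε) ∂μ)
    (γ : ℝ) (hγ : 0 < γ) :
    ∫ x in Set.Icc (-γ) γ, g x = 1 - M (-γ) := by
  -- a.e. positivity of ε
  have hae : ∀ᵐ ε ∂μ, 0 < ε := by
    have : μ (Set.Ioi 0)ᶜ = 0 := by
      rw [measure_compl measurableSet_Ioi (measure_ne_top μ _), hμ, measure_univ]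
      simp
    filter_upwards [measure_eq_zero_iff_ae_notMem.mp this] with ε hε
    simpa [Set.mem_Ioi] using hε
  set ν : Measure ℝ := volume.restrict (Set.Icc (-γ) γ) with hν
  set F : ℝ → ℝ → ℝ := fun x ε => ε / 2 * Real.exp (-(ε * |x|)) with hF
  have hFcont : Continuous (Function.uncurry F) := by
    apply Continuous.mul
    · exact (continuous_snd.div_const 2)
    · exact (Real.continuous_exp.comp ((continuous_snd.mul (continuous_fst.abs)).neg))
  -- integrability of the exp(-γ ε) term
  have hexp_int : Integrable (fun ε : ℝ => Real.exp (-γ * ε)) μ := by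
    apply Integrable.mono' (integrable_const (1 : ℝ))
    · exact (Real.continuous_exp.comp (continuous_const.mul continuous_id)).aestronglyMeasurable
    · filter_upwards [hae] with ε hε
      rw [Real.norm_eq_abs, abs_of_nonneg (Real.exp_nonneg _)]
      apply Real.exp_le_one_iff.mpr
      nlinarith
  -- integrability for Fubini
  have hint : Integrable (Function.uncurry F) (ν.prod μ) := by
    rw [integrable_prod_iff' hFcont.aestronglyMeasurable]
    constructor
    · filter_upwards with ε
      have : Continuous fun x : ℝ => F x ε := by
        exact continuous_const.mul
          (Real.continuous_exp.comp ((continuous_const.mul continuous_abs).neg))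
      exact this.integrableOn_Icc
    · have heq : (fun ε => ∫ x, ‖F x ε‖ ∂ν) =ᵐ[μ] fun ε => 1 - Real.exp (-γ * ε) := by
        filter_upwards [hae] with ε hε
        have hnn : ∀ x : ℝ, ‖F x ε‖ = F x ε := by
          intro x
          rw [Real.norm_eq_abs, abs_of_nonneg]
          positivity
        calc ∫ x, ‖F x ε‖ ∂ν = ∫ x, F x ε ∂ν := by
              exact integral_congr_ae (Filter.Eventually.of_forall hnn)
          _ = 1 - Real.exp (-γ * ε) := laplace_inner ε γ hε hγ
      apply Integrable.congr _ heq.symm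
      exact (integrable_const (1 : ℝ)).sub hexp_int
  -- Fubini
  have hswap : ∫ x, ∫ ε, F x ε ∂μ ∂ν = ∫ ε, ∫ x, F x ε ∂ν ∂μ :=
    integral_integral_swap hint
  have hinner : ∫ ε, ∫ x, F x ε ∂ν ∂μ = ∫ ε, (1 - Real.exp (-γ * ε)) ∂μ := by
    apply integral_congr_ae
    filter_upwards [hae] with ε hε
    exact laplace_inner ε γ hε hγ
  calc ∫ x in Set.Icc (-γ) γ, g x = ∫ x, ∫ ε, F x ε ∂μ ∂ν := by
        apply integral_congr_ae
        filter_upwards with x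
        exact hg x
    _ = ∫ ε, (1 - Real.exp (-γ * ε)) ∂μ := by rw [hswap, hinner]
    _ = (∫ _, (1:ℝ) ∂μ) - ∫ ε, Real.exp (-γ * ε) ∂μ :=
        integral_sub (integrable_const 1) hexp_int
    _ = 1 - M (-γ) := by
        rw [hM, integral_const]
        simp
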